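/- Let F be the relatively free nilpotent group of class two of rank two, with free generators x and y, and let n > 1 be an integer. Let H be the subgroup of F generated by xⁿ and yⁿ. Then [x,y]ⁿ lies in dom_F^{𝒩₂}(H) but [x,y]ⁿ does not lie in H. -/

import Mathlib

universe u v

/-- The dominion of a subgroup `H` of `G` in the class of groups `P`. -/
def dominion {G : Type v} [Group G] (P : (K : Type u) → [Group K] → Prop)
    (H : Subgroup G) : Set G :=
  {a : G | ∀ (K : Type u) [Group K], P K → ∀ f g : G →* K,
    (∀ h ∈ H, f h = g h) → f a = g a}

/-- The commutator `[a,b] = a⁻¹b⁻¹ab`. -/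
def commElem {G : Type v} [Group G] (a b : G) : G := a⁻¹ * b⁻¹ * a * b

/-- The class `𝒩₂` of nilpotent groups of class at most two: those groups whose
third lower central series term (`lowerCentralSeries K 2` in Mathlib's indexing)
is trivial. -/
def NilTwo (K : Type u) [Group K] : Prop := (⊤ : Subgroup K).lowerCentralSeries 2 = ⊥

/-- The relatively free nilpotent group of class two of rank two: the quotient of
the free group on two generators by the third term of its lower central series. -/
abbrev FreeNilTwo : Type := FreeGroup (Fin 2) ⧸ (⊤ : Subgroup (FreeGroup (Fin 2))).lowerCentralSeries 2

open scoped commutatorElement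

/-! ### Auxiliary lemmas about groups of class at most two -/

section C2
variable {K : Type*} [Group K]

theorem nilTwo_imp_comm_central (h2 : NilTwo K) : ∀ a b c : K, ⁅⁅a,b⁆,c⁆ = 1 := by
  intro a b c
  have h1 : ⁅a, b⁆ ∈ (⊤ : Subgroup K).lowerCentralSeries 1 := by
    rw [Subgroup.top_lowerCentralSeries_one]
    exact Subgroup.commutator_mem_commutator (Subgroup.mem_top a) (Subgroup.mem_top b)
  have : ⁅⁅a,b⁆,c⁆ ∈ (⊤ : Subgroup K).lowerCentralSeries 2 := by
    rw [Subgroup.lowerCentralSeries_succ]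
    exact Subgroup.commutator_mem_commutator h1 (Subgroup.mem_top c)
  rw [NilTwo] at h2
  rwa [h2, Subgroup.mem_bot] at this

theorem comm_central_imp_nilTwo (hK : ∀ a b c : K, ⁅⁅a,b⁆,c⁆ = 1) : NilTwo K := by
  have h : (⊤ : Subgroup K).lowerCentralSeries 1 ≤ Subgroup.center K := by
    rw [Subgroup.top_lowerCentralSeries_one, commutator_def, Subgroup.commutator_le]
    intro a _ b _
    rw [Subgroup.mem_center_iff]
    intro c
    exact (commutatorElement_eq_one_iff_commute.mp (hK a b c)).symm
  exact Subgroup.lowerCentralSeries_succ_eq_bot _ h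

theorem commCentral (hK : ∀ a b c : K, ⁅⁅a,b⁆,c⁆ = 1) (a b c : K) : Commute ⁅a,b⁆ c :=
  commutatorElement_eq_one_iff_commute.mp (hK a b c)

theorem commElem_eq (a b : K) : commElem a b = ⁅a⁻¹, b⁻¹⁆ := by
  simp [commElem, commutatorElement_def]

theorem commElem_central (hK : ∀ a b c : K, ⁅⁅a,b⁆,c⁆ = 1) (a b c : K) :
    Commute (commElem a b) c := by
  rw [commElem_eq]; exact commCentral hK _ _ _

theorem commElem_mul_left (hK : ∀ a b c : K, ⁅⁅a,b⁆,c⁆ = 1) (u v w : K) :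
    commElem (u*v) w = commElem u w * commElem v w := by
  have h2 : v⁻¹ * commElem u w * v = commElem u w := by
    rw [mul_assoc, (commElem_central hK u w v).eq]; group
  simp only [commElem] at h2 ⊢
  rw [mul_inv_rev]
  calc v⁻¹ * u⁻¹ * w⁻¹ * (u * v) * w
      = (v⁻¹ * (u⁻¹ * w⁻¹ * u * w) * v) * (v⁻¹ * w⁻¹ * v * w) := by group
    _ = u⁻¹ * w⁻¹ * u * w * (v⁻¹ * w⁻¹ * v * w) := by rw [h2]

theorem commElem_mul_right (hK : ∀ a b c : K, ⁅⁅a,b⁆,c⁆ = 1) (u v w : K) :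
    commElem u (v*w) = commElem u w * commElem u v := by
  have h2 : w⁻¹ * commElem u v * w = commElem u v := by
    rw [mul_assoc, (commElem_central hK u v w).eq]; group
  simp only [commElem] at h2 ⊢
  rw [mul_inv_rev]
  calc u⁻¹ * (w⁻¹ * v⁻¹) * u * (v * w)
      = (u⁻¹ * w⁻¹ * u * w) * (w⁻¹ * (u⁻¹ * v⁻¹ * u * v) * w) := by group
    _ = (u⁻¹ * w⁻¹ * u * w) * (u⁻¹ * v⁻¹ * u * v) := by rw [h2]

theorem commElem_pow_left (hK : ∀ a b c : K, ⁅⁅a,b⁆,c⁆ = 1) (u w : K) (n : ℕ) :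
    commElem (u^n) w = (commElem u w)^n := by
  induction n with
  | zero => simp [commElem]
  | succ k ih => rw [pow_succ, commElem_mul_left hK, ih, pow_succ]

theorem commElem_pow_right (hK : ∀ a b c : K, ⁅⁅a,b⁆,c⁆ = 1) (u w : K) (n : ℕ) :
    commElem u (w^n) = (commElem u w)^n := by
  induction n with
  | zero => simp [commElem]
  | succ k ih => rw [pow_succ, commElem_mul_right hK, ih, pow_succ']

end C2

/-! ### The discrete Heisenberg group -/

structure Heis where
  a : ℤ
  b : ℤ
  c : ℤ

namespace Heis

instance : Mul Heis := ⟨fun g h => ⟨g.a + h.a, g.b + h.b, g.c + h.c + g.a * h.b⟩⟩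
instance : One Heis := ⟨⟨0, 0, 0⟩⟩
instance : Inv Heis := ⟨fun g => ⟨-g.a, -g.b, g.a * g.b - g.c⟩⟩

theorem mul_def (g h : Heis) : g * h = ⟨g.a + h.a, g.b + h.b, g.c + h.c + g.a * h.b⟩ := rfl
theorem one_def : (1 : Heis) = ⟨0, 0, 0⟩ := rfl
theorem inv_def (g : Heis) : g⁻¹ = ⟨-g.a, -g.b, g.a * g.b - g.c⟩ := rfl

instance : Group Heis where
  mul_assoc g h k := by
    simp only [mul_def, mk.injEq]; refine ⟨by ring, by ring, by ring⟩
  one_mul g := by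
    cases g; simp only [one_def, mul_def, mk.injEq]; refine ⟨by ring, by ring, by ring⟩
  mul_one g := by
    cases g; simp only [one_def, mul_def, mk.injEq]; refine ⟨by ring, by ring, by ring⟩
  inv_mul_cancel g := by
    simp only [inv_def, mul_def, one_def, mk.injEq]; refine ⟨by ring, by ring, by ring⟩

def X : Heis := ⟨1, 0, 0⟩
def Y : Heis := ⟨0, 1, 0⟩
def Z : Heis := ⟨0, 0, 1⟩

theorem central (g : Heis) (ha : g.a = 0) (hb : g.b = 0) (h : Heis) : g * h = h * g := by
  simp only [mul_def, mk.injEq, ha, hb]; refine ⟨by ring, by ring, by ring⟩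

theorem comm_ab (g h : Heis) : (⁅g, h⁆ : Heis).a = 0 ∧ (⁅g, h⁆ : Heis).b = 0 := by
  constructor <;> (simp only [commutatorElement_def, mul_def, inv_def]; ring)

theorem nilTwoAux : ∀ g h k : Heis, ⁅⁅g,h⁆,k⁆ = 1 := by
  intro g h k
  rw [commutatorElement_eq_one_iff_commute]
  exact central _ (comm_ab g h).1 (comm_ab g h).2 k

theorem nilTwo : NilTwo Heis := comm_central_imp_nilTwo nilTwoAux

theorem X_pow (m : ℕ) : X ^ m = ⟨m, 0, 0⟩ := by
  induction m with
  | zero => rfl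
  | succ k ih =>
    rw [pow_succ, ih]
    simp only [mul_def, X, mk.injEq]
    refine ⟨by push_cast; ring, by ring, by ring⟩

theorem Y_pow (m : ℕ) : Y ^ m = ⟨0, m, 0⟩ := by
  induction m with
  | zero => rfl
  | succ k ih =>
    rw [pow_succ, ih]
    simp only [mul_def, Y, mk.injEq]
    refine ⟨by ring, by push_cast; ring, by ring⟩

theorem Z_pow (m : ℕ) : Z ^ m = ⟨0, 0, m⟩ := by
  induction m with
  | zero => rfl
  | succ k ih =>
    rw [pow_succ, ih]
    simp only [mul_def, Z, mk.injEq]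
    refine ⟨by ring, by ring, by push_cast; ring⟩

theorem commElem_XY : commElem X Y = Z := by
  show Heis.mk _ _ _ * _ * _ * _ = Z
  simp only [mul_def, inv_def, X, Y, Z, mk.injEq]
  refine ⟨by ring, by ring, by ring⟩

def S (n : ℕ) : Subgroup Heis where
  carrier := {g | (n:ℤ) ∣ g.a ∧ (n:ℤ) ∣ g.b ∧ ((n:ℤ)^2) ∣ g.c}
  mul_mem' := by
    rintro g h ⟨g1, g2, g3⟩ ⟨h1, h2, h3⟩
    refine ⟨dvd_add g1 h1, dvd_add g2 h2, ?_⟩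
    refine dvd_add (dvd_add g3 h3) ?_
    rw [sq]; exact mul_dvd_mul g1 h2
  one_mem' := by
    refine ⟨?_, ?_, ?_⟩ <;> simp [one_def]
  inv_mem' := by
    rintro g ⟨g1, g2, g3⟩
    refine ⟨dvd_neg.mpr g1, dvd_neg.mpr g2, ?_⟩
    show ((n:ℤ)^2) ∣ g.a * g.b - g.c
    refine dvd_sub ?_ g3
    rw [sq]; exact mul_dvd_mul g1 g2

end Heis

/-! ### The homomorphism from `FreeNilTwo` to the Heisenberg group -/

/-- The lift of `0 ↦ X`, `1 ↦ Y` to the free group. -/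
def psi : FreeGroup (Fin 2) →* Heis := FreeGroup.lift ![Heis.X, Heis.Y]

theorem psi_ker : (⊤ : Subgroup (FreeGroup (Fin 2))).lowerCentralSeries 2 ≤ psi.ker := by
  intro g hg
  have : psi g ∈ Subgroup.map psi ((⊤ : Subgroup (FreeGroup (Fin 2))).lowerCentralSeries 2) :=
    ⟨g, hg, rfl⟩
  have h2 := Subgroup.lowerCentralSeries.map psi 2 this
  rw [Heis.nilTwo] at h2
  exact h2

/-- The induced homomorphism `FreeNilTwo →* Heis`. -/
def phi : FreeNilTwo →* Heis :=
  QuotientGroup.lift _ psi psi_ker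

theorem phi_x : phi (QuotientGroup.mk (FreeGroup.of 0)) = Heis.X := by
  show psi (FreeGroup.of 0) = Heis.X
  simp [psi]

theorem phi_y : phi (QuotientGroup.mk (FreeGroup.of 1)) = Heis.Y := by
  show psi (FreeGroup.of 1) = Heis.Y
  simp [psi]

theorem phi_commElem {G H : Type*} [Group G] [Group H] (f : G →* H) (a b : G) :
    f (commElem a b) = commElem (f a) (f b) := by
  simp [commElem]

/-! ### The main theorem -/

/-- In the relatively free nilpotent group of class two of rank two, freely
generated by `x` and `y`, for any integer `n > 1`, the element `[x,y]ⁿ` lies in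
the `𝒩₂`-dominion of the subgroup `H = ⟨xⁿ, yⁿ⟩`, but `[x,y]ⁿ ∉ H`. -/
theorem dominion_nontrivial_nilTwo (n : ℕ) (hn : 1 < n) :
    let x : FreeNilTwo := QuotientGroup.mk (FreeGroup.of 0)
    let y : FreeNilTwo := QuotientGroup.mk (FreeGroup.of 1)
    let H : Subgroup FreeNilTwo := Subgroup.closure {x ^ n, y ^ n}
    (commElem x y) ^ n ∈ dominion NilTwo H ∧ (commElem x y) ^ n ∉ H := by
  intro x y H
  constructor
  · -- dominion part
    intro K _ hP f g hfg
    have hK : ∀ a b c : K, ⁅⁅a,b⁆,c⁆ = 1 := nilTwo_imp_comm_central hP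
    have hxH : x ^ n ∈ H := Subgroup.subset_closure (Set.mem_insert _ _)
    have hyH : y ^ n ∈ H := Subgroup.subset_closure (Set.mem_insert_of_mem _ rfl)
    have hx : (f x) ^ n = (g x) ^ n := by
      have := hfg _ hxH; rwa [map_pow, map_pow] at this
    have hy : (f y) ^ n = (g y) ^ n := by
      have := hfg _ hyH; rwa [map_pow, map_pow] at this
    rw [map_pow, map_pow, phi_commElem f, phi_commElem g]
    calc (commElem (f x) (f y)) ^ n
        = commElem ((f x) ^ n) (f y) := (commElem_pow_left hK _ _ n).symm
      _ = commElem ((g x) ^ n) (f y) := by rw [hx]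
      _ = (commElem (g x) (f y)) ^ n := commElem_pow_left hK _ _ n
      _ = commElem (g x) ((f y) ^ n) := (commElem_pow_right hK _ _ n).symm
      _ = commElem (g x) ((g y) ^ n) := by rw [hy]
      _ = (commElem (g x) (g y)) ^ n := commElem_pow_right hK _ _ n
  · -- non-membership part
    intro hmem
    have hle : H ≤ (Heis.S n).comap phi := by
      apply Subgroup.closure_le _ |>.mpr
      rintro z (rfl | rfl)
      · show phi (x ^ n) ∈ Heis.S n
        rw [map_pow, phi_x, Heis.X_pow]
        exact ⟨dvd_refl _, dvd_zero _, dvd_zero _⟩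
      · show phi (y ^ n) ∈ Heis.S n
        rw [map_pow, phi_y, Heis.Y_pow]
        exact ⟨dvd_zero _, dvd_refl _, dvd_zero _⟩
    have hin : phi ((commElem x y) ^ n) ∈ Heis.S n := hle hmem
    rw [map_pow, phi_commElem, phi_x, phi_y, Heis.commElem_XY, Heis.Z_pow] at hin
    obtain ⟨-, -, hdvd⟩ := hin
    have hdvd' : n ^ 2 ∣ n := by
      have := Int.natCast_dvd_natCast.mp (by push_cast at hdvd ⊢; exact hdvd)
      exact this
    have := Nat.le_of_dvd (by omega) hdvd'
    nlinarith
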